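/- arXiv:2303.00743 — 2 statements merged into one kernel-verified Lean document; each statement's English description precedes it below -/
import Mathlib

section
/- Define θ(z) := −∑_{n∈ℤ} exp(πi(n + 1/2)²ω + 2πi(n + 1/2)(z + 1/2)) where ω = exp(2πi/3). Then θ(z) = 0 if and only if z ∈ Λ := ℤ + ωℤ; moreover all zeros are simple, i.e., θ'(z) ≠ 0 for every z ∈ Λ. -/
noncomputable section

open Complex ComplexConjugate

/-- ω = exp(2πi/3). -/
def ω : ℂ := Complex.exp (2 * Real.pi * Complex.I / 3)

/-- The lattice Λ = ℤ + ωℤ. -/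
def Lam : Set ℂ := {z : ℂ | ∃ m n : ℤ, z = (m : ℂ) + (n : ℂ) * ω}

/-- The dual lattice Λ* = (4πi/√3)Λ. -/
def LamS : Set ℂ :=
  {z : ℂ | ∃ m n : ℤ,
    z = 4 * (Real.pi : ℂ) * Complex.I / (Real.sqrt 3 : ℂ) * ((m : ℂ) + (n : ℂ) * ω)}

/-- ⟨z,w⟩ = Re (z ⬝ conj w). -/
def pairing (z w : ℂ) : ℝ := (z * conj w).re

/-- K = 4π/3. -/
def Kpt : ℂ := 4 * (Real.pi : ℂ) / 3

/-- 2D_z̄ u = −i(∂ₓu + i∂9u), via the real Fréchet derivative. -/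
def twoDbar (u : ℂ → ℂ) (z : ℂ) : ℂ :=
  -Complex.I * (fderiv ℝ u z 1 + Complex.I * fderiv ℝ u z Complex.I)

/-- The magnetic chiral Dirac operator D_B(α). -/
def DB (U : ℂ → ℂ) (α B : ℂ) (u : ℂ → ℂ × ℂ) (z : ℂ) : ℂ × ℂ :=
  (twoDbar (fun w => (u w).1) z + α * U z * (u z).2 + B * (u z).1,
   α * U (-z) * (u z).1 + twoDbar (fun w => (u w).2) z - B * (u z).2)

/-- The chiral Dirac operator D(α) (no magnetic field). -/
def Dop (U : ℂ → ℂ) (α : ℂ) (u : ℂ → ℂ × ℂ) (z : ℂ) : ℂ × ℂ :=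
  (twoDbar (fun w => (u w).1) z + α * U z * (u z).2,
   α * U (-z) * (u z).1 + twoDbar (fun w => (u w).2) z)

/-- The L²₀ boundary condition. -/
def BC (u : ℂ → ℂ × ℂ) : Prop :=
  ∀ γ ∈ Lam, ∀ z : ℂ,
    u (z + γ) = (Complex.exp (-Complex.I * (pairing γ Kpt : ℂ)) * (u z).1,
                 Complex.exp (Complex.I * (pairing γ Kpt : ℂ)) * (u z).2)

/-- Hypotheses on the potential U. -/
def IsPotential (U : ℂ → ℂ) : Prop :=
  ContDiff ℝ (⊤ : ℕ∞) U ∧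
  (∀ γ ∈ Lam, ∀ z : ℂ,
    U (z + γ) = Complex.exp (-2 * Complex.I * (pairing γ Kpt : ℂ)) * U z) ∧
  (∀ z : ℂ, U (ω * z) = ω * U z) ∧
  (∀ z : ℂ, conj (U (conj z)) = - U (-z))

/-- The Jacobi theta function θ(z) = θ₁(z|ω) = −θ_{1/2,1/2}(z|ω). -/
def θf (z : ℂ) : ℂ :=
  -∑' n : ℤ, Complex.exp ((Real.pi : ℂ) * Complex.I * ((n : ℂ) + 1/2)^2 * ω
      + 2 * (Real.pi : ℂ) * Complex.I * ((n : ℂ) + 1/2) * (z + 1/2))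


/- ## Auxiliary development -/

lemma omega_eq : ω = (Real.cos (2*Real.pi/3) : ℝ) + (Real.sin (2*Real.pi/3) : ℝ) * Complex.I := by
  rw [ω, show (2 * Real.pi * Complex.I / 3) = ((2*Real.pi/3 : ℝ) : ℂ) * Complex.I by push_cast; ring,
    Complex.exp_mul_I, Complex.ofReal_cos, Complex.ofReal_sin]

lemma omega_im : ω.im = Real.sqrt 3 / 2 := by
  rw [omega_eq]
  simp [show 2*Real.pi/3 = Real.pi - Real.pi/3 by ring, Real.sin_pi_sub, Real.sin_pi_div_three]

lemma omega_re : ω.re = -(1/2) := by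
  rw [omega_eq]
  simp [show 2*Real.pi/3 = Real.pi - Real.pi/3 by ring, Real.cos_pi_sub, Real.cos_pi_div_three]

lemma omega_im_pos : 0 < ω.im := by
  rw [omega_im]; positivity

def sθ : ℂ := (1 + ω) / 2
def Cθ (z : ℂ) : ℂ := Complex.exp ((Real.pi:ℂ) * Complex.I * ω / 4
  + (Real.pi:ℂ) * Complex.I * (z + 1/2))

lemma Cθ_ne (z : ℂ) : Cθ z ≠ 0 := Complex.exp_ne_zero _

lemma term_eq (z : ℂ) (n : ℤ) :
    Complex.exp ((Real.pi : ℂ) * Complex.I * ((n : ℂ) + 1/2)^2 * ω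
      + 2 * (Real.pi : ℂ) * Complex.I * ((n : ℂ) + 1/2) * (z + 1/2))
    = Cθ z * jacobiTheta₂_term n (z + sθ) ω := by
  rw [Cθ, jacobiTheta₂_term, ← Complex.exp_add]
  congr 1
  rw [sθ]; ring

lemma θf_eq (z : ℂ) : θf z = -(Cθ z * jacobiTheta₂ (z + sθ) ω) := by
  rw [θf, jacobiTheta₂, ← tsum_mul_left]
  congr 1
  exact tsum_congr fun n => term_eq z n

lemma summable_theta_term (z : ℂ) :
    Summable (fun n : ℤ => Complex.exp ((Real.pi : ℂ) * Complex.I * ((n : ℂ) + 1/2)^2 * ω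
      + 2 * (Real.pi : ℂ) * Complex.I * ((n : ℂ) + 1/2) * (z + 1/2))) := by
  have h := ((summable_jacobiTheta₂_term_iff (z + sθ) ω).2 omega_im_pos).mul_left (Cθ z)
  exact h.congr fun n => (term_eq z n).symm

lemma hasDerivAt_Cθ (z : ℂ) : HasDerivAt Cθ ((Real.pi:ℂ) * Complex.I * Cθ z) z := by
  have h : HasDerivAt (fun z : ℂ => (Real.pi:ℂ) * Complex.I * ω / 4
      + (Real.pi:ℂ) * Complex.I * (z + 1/2)) ((Real.pi:ℂ) * Complex.I) z := by
    simpa using (((hasDerivAt_id z).add_const (1/2:ℂ)).const_mul ((Real.pi:ℂ) * Complex.I)).const_add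
      ((Real.pi:ℂ) * Complex.I * ω / 4)
  have h2 := h.cexp
  have : Cθ = fun z : ℂ => Complex.exp ((Real.pi:ℂ) * Complex.I * ω / 4
      + (Real.pi:ℂ) * Complex.I * (z + 1/2)) := rfl
  rw [this]
  simpa [mul_comm] using h2

lemma hasDerivAt_Θs (z : ℂ) :
    HasDerivAt (fun z : ℂ => jacobiTheta₂ (z + sθ) ω) (jacobiTheta₂' (z + sθ) ω) z := by
  have := (hasDerivAt_jacobiTheta₂_fst (z + sθ) omega_im_pos).comp z ((hasDerivAt_id z).add_const sθ)
  simpa [Function.comp_def] using this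

lemma hasDerivAt_θf (z : ℂ) :
    HasDerivAt θf (-((Real.pi:ℂ) * Complex.I * Cθ z * jacobiTheta₂ (z + sθ) ω
      + Cθ z * jacobiTheta₂' (z + sθ) ω)) z := by
  have h := ((hasDerivAt_Cθ z).mul (hasDerivAt_Θs z)).neg
  have : (-(Cθ * fun z => jacobiTheta₂ (z + sθ) ω)) = θf := by
    funext w; exact (θf_eq w).symm
  rw [this] at h
  convert h using 1

lemma diff_θf : Differentiable ℂ θf := fun z => (hasDerivAt_θf z).differentiableAt

def νθ (z : ℂ) : ℂ := -Complex.exp (-(Real.pi:ℂ)*Complex.I*ω - 2*(Real.pi:ℂ)*Complex.I*z)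

lemma νθ_ne (z : ℂ) : νθ z ≠ 0 := neg_ne_zero.2 (Complex.exp_ne_zero _)

lemma shift1 (z : ℂ) : θf (z + 1) = -θf z := by
  have h1 : Cθ (z+1) = -Cθ z := by
    rw [Cθ, Cθ, ← neg_one_mul, ← Complex.exp_pi_mul_I, ← Complex.exp_add]
    congr 1; ring
  have h2 : jacobiTheta₂ (z + 1 + sθ) ω = jacobiTheta₂ (z + sθ) ω := by
    rw [show z + 1 + sθ = (z + sθ) + 1 by ring, jacobiTheta₂_add_left]
  rw [θf_eq, θf_eq, h1, h2]; ring

lemma shiftw (z : ℂ) : θf (z + ω) = νθ z * θf z := by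
  have key : Cθ (z+ω) * Complex.exp (-(Real.pi:ℂ) * Complex.I * (ω + 2*(z+sθ)))
      = -(Complex.exp (-(Real.pi:ℂ)*Complex.I*ω - 2*(Real.pi:ℂ)*Complex.I*z) * Cθ z) := by
    have hneg : ∀ ζ : ℂ, -Complex.exp ζ = Complex.exp (ζ - (Real.pi:ℂ)*Complex.I) := by
      intro ζ; rw [Complex.exp_sub, Complex.exp_pi_mul_I]; ring
    rw [Cθ, Cθ, ← Complex.exp_add, ← Complex.exp_add, hneg]
    congr 1; rw [sθ]; ring
  rw [θf_eq, θf_eq, show z + ω + sθ = (z + sθ) + ω by ring, jacobiTheta₂_add_left', νθ]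
  linear_combination (-(jacobiTheta₂ (z + sθ) ω)) * key

lemma deriv_shift1 (z : ℂ) : deriv θf (z + 1) = -deriv θf z := by
  have h1 : HasDerivAt (fun z => θf (z + 1)) (deriv θf (z+1) * 1) z :=
    by have := (diff_θf (z+1)).hasDerivAt.comp z ((hasDerivAt_id z).add_const 1); exact this
  have h2 : HasDerivAt (fun z => -θf z) (-deriv θf z) z := (diff_θf z).hasDerivAt.neg
  have : (fun z : ℂ => θf (z + 1)) = fun z => -θf z := funext shift1
  rw [this] at h1
  simpa using h1.unique h2

lemma deriv_shiftw (z : ℂ) (hz : θf z = 0) : deriv θf (z + ω) = νθ z * deriv θf z := by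
  have h1 : HasDerivAt (fun z => θf (z + ω)) (deriv θf (z+ω) * 1) z :=
    by have := (diff_θf (z+ω)).hasDerivAt.comp z ((hasDerivAt_id z).add_const ω); exact this
  have hg : HasDerivAt (fun z : ℂ => -(Real.pi:ℂ)*Complex.I*ω - 2*(Real.pi:ℂ)*Complex.I*z)
      (-(2*(Real.pi:ℂ)*Complex.I)) z := by
    simpa using (((hasDerivAt_id z).const_mul (2*(Real.pi:ℂ)*Complex.I)).const_sub
      (-(Real.pi:ℂ)*Complex.I*ω))
  have h2 := hg.cexp.neg.mul (diff_θf z).hasDerivAt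
  have : (fun z : ℂ => θf (z + ω)) = fun z => νθ z * θf z := funext shiftw
  rw [this] at h1
  have := h1.unique h2
  rw [hz] at this
  simpa [νθ] using this

def Eθ (n : ℕ) (w : ℂ) : ℂ :=
  ∑ j ∈ Finset.range (2*n+1), (-1:ℂ)^j * Complex.exp ((2*(n:ℂ) - 2*(j:ℂ)) * w * Complex.I)
def qθ (n : ℕ) : ℂ := Complex.exp ((Real.pi:ℂ) * Complex.I * ((n:ℂ)+1/2)^2 * ω)
def Gθ (z : ℂ) : ℂ := ∑' n : ℕ, qθ n * Eθ n ((Real.pi:ℂ) * (z + 1/2))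

lemma cos_mul_E (n : ℕ) (w : ℂ) :
    Complex.cos w * Eθ n w = Complex.cos ((2*(n:ℂ)+1)*w) := by
  set h : ℕ → ℂ := fun j => (-1:ℂ)^j * Complex.exp ((2*(n:ℂ)+1-2*(j:ℂ))*w*Complex.I) with hh
  have step : ∀ j : ℕ, Complex.cos w * ((-1:ℂ)^j
      * Complex.exp ((2*(n:ℂ) - 2*(j:ℂ)) * w * Complex.I)) = (h j - h (j+1))/2 := by
    intro j
    rw [Complex.cos]
    have e1 : Complex.exp (w*Complex.I) * Complex.exp ((2*(n:ℂ)-2*(j:ℂ))*w*Complex.I)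
        = Complex.exp ((2*(n:ℂ)+1-2*(j:ℂ))*w*Complex.I) := by
      rw [← Complex.exp_add]; congr 1; ring
    have e2 : Complex.exp (-w*Complex.I) * Complex.exp ((2*(n:ℂ)-2*(j:ℂ))*w*Complex.I)
        = Complex.exp ((2*(n:ℂ)+1-2*((j:ℂ)+1))*w*Complex.I) := by
      rw [← Complex.exp_add]; congr 1; ring
    simp only [hh, pow_succ, Nat.cast_add, Nat.cast_one]
    linear_combination ((-1:ℂ)^j/2) * e1 + ((-1:ℂ)^j/2) * e2
  have hsum : Complex.cos w * Eθ n w = (∑ j ∈ Finset.range (2*n+1), (h j - h (j+1)))/2 := by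
    rw [Eθ, Finset.mul_sum, Finset.sum_div]
    exact Finset.sum_congr rfl fun j _ => step j
  rw [hsum, Finset.sum_range_sub']
  have h0 : h 0 = Complex.exp ((2*(n:ℂ)+1)*w*Complex.I) := by simp [hh]
  have hN : h (2*n+1) = -Complex.exp (-((2*(n:ℂ)+1)*w)*Complex.I) := by
    rw [hh]
    have : ((-1:ℂ))^(2*n+1) = -1 := Odd.neg_one_pow ⟨n, by ring⟩
    push_cast
    rw [this]
    rw [show (2*(n:ℂ)+1-2*(2*(n:ℂ)+1)) = -(2*(n:ℂ)+1) by ring]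
    ring_nf
  rw [h0, hN, Complex.cos]
  ring_nf

def Kθ : ℝ := Real.exp (-(Real.pi * Real.sqrt 3)/8)
def rθ : ℝ := Real.exp (-(Real.pi * Real.sqrt 3)/2)

lemma sqrt3_ge : (1.5:ℝ) ≤ Real.sqrt 3 := by
  rw [Real.le_sqrt (by norm_num) (by norm_num)]; norm_num

lemma r_le : rθ ≤ 1/7 := by
  have h1 : (2:ℝ) ≤ Real.pi * Real.sqrt 3 / 2 := by
    nlinarith [Real.pi_gt_three, sqrt3_ge, Real.sqrt_nonneg 3]
  have h2 : (7:ℝ) ≤ Real.exp (Real.pi * Real.sqrt 3 / 2) := by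
    have e2 : Real.exp 2 = Real.exp 1 * Real.exp 1 := by
      rw [← Real.exp_add]; norm_num
    have := Real.exp_one_gt_d9
    have h3 : Real.exp 2 ≤ Real.exp (Real.pi * Real.sqrt 3 / 2) := Real.exp_le_exp.2 h1
    nlinarith
  rw [rθ, show -(Real.pi * Real.sqrt 3)/2 = -(Real.pi * Real.sqrt 3/2) by ring, Real.exp_neg]
  rw [inv_le_comm₀ (Real.exp_pos _) (by norm_num)]
  linarith

lemma r_pos : 0 < rθ := Real.exp_pos _
lemma K_pos : 0 < Kθ := Real.exp_pos _

lemma norm_qθ (n : ℕ) : ‖qθ n‖ = Real.exp (-(Real.pi * ((n:ℝ)+1/2)^2 * ω.im)) := by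
  rw [qθ, Complex.norm_exp]
  congr 1
  have h : (Real.pi:ℂ) * Complex.I * ((n:ℂ)+1/2)^2 * ω
      = ((Real.pi * ((n:ℝ)+1/2)^2 : ℝ):ℂ) * (Complex.I*ω) := by push_cast; ring
  rw [h, Complex.re_ofReal_mul]
  simp [Complex.mul_re]

lemma norm_E_le (n : ℕ) {w : ℂ} {b : ℝ} (hb : 0 ≤ b) (hw : |w.im| ≤ b) :
    ‖Eθ n w‖ ≤ (2*(n:ℝ)+1) * Real.exp (2*n*b) := by
  refine le_trans (norm_sum_le _ _) ?_
  have hterm : ∀ j ∈ Finset.range (2*n+1),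
      ‖(-1:ℂ)^j * Complex.exp ((2*(n:ℂ) - 2*(j:ℂ)) * w * Complex.I)‖
        ≤ Real.exp (2*n*b) := by
    intro j hj
    rw [norm_mul, norm_pow, norm_neg, norm_one, one_pow, one_mul,
      Complex.norm_exp, Real.exp_le_exp]
    have hre : ((2*(n:ℂ) - 2*(j:ℂ)) * w * Complex.I).re = -((2*(n:ℝ)-2*(j:ℝ)) * w.im) := by
      have h : (2*(n:ℂ) - 2*(j:ℂ)) * w * Complex.I
          = ((2*(n:ℝ)-2*(j:ℝ) : ℝ):ℂ) * (w * Complex.I) := by push_cast; ring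
      rw [h, Complex.re_ofReal_mul]
      simp [Complex.mul_re]
    rw [hre]
    have hj' : (j:ℝ) ≤ 2*(n:ℝ) := by exact_mod_cast Nat.lt_succ_iff.1 (Finset.mem_range.1 hj)
    have hj0 : (0:ℝ) ≤ (j:ℝ) := Nat.cast_nonneg j
    calc -((2*(n:ℝ)-2*(j:ℝ)) * w.im) ≤ |(2*(n:ℝ)-2*(j:ℝ)) * w.im| := neg_le_abs _
      _ = |2*(n:ℝ)-2*(j:ℝ)| * |w.im| := abs_mul _ _
      _ ≤ (2*(n:ℝ)) * b := by
          apply mul_le_mul _ hw (abs_nonneg _) (by positivity)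
          rw [abs_le]; constructor <;> nlinarith
      _ = 2*(n:ℝ)*b := by ring
  refine le_trans (Finset.sum_le_sum hterm) (le_of_eq ?_)
  rw [Finset.sum_const, Finset.card_range, nsmul_eq_mul]
  push_cast; ring

lemma two_n_one_le (n : ℕ) : (2*(n:ℝ)+1) ≤ 3^n := by
  induction n with
  | zero => norm_num
  | succ m ih =>
      have h3 : (0:ℝ) ≤ (m:ℝ) := Nat.cast_nonneg m
      rw [pow_succ]
      push_cast
      push_cast at ih
      nlinarith [pow_nonneg (by norm_num : (0:ℝ) ≤ 3) m]

lemma term_bound (n : ℕ) {z : ℂ} (hz : |z.im| ≤ Real.sqrt 3/4) :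
    ‖qθ n * Eθ n ((Real.pi:ℂ)*(z+1/2))‖ ≤ Kθ * (3*rθ)^n := by
  have him : |((Real.pi:ℂ)*(z+1/2)).im| ≤ Real.pi * (Real.sqrt 3/4) := by
    have h : ((Real.pi:ℂ)*(z+1/2)).im = Real.pi * z.im := by
      simp [Complex.im_ofReal_mul]
    rw [h, abs_mul, abs_of_pos Real.pi_pos]
    exact mul_le_mul_of_nonneg_left hz Real.pi_pos.le
  have hE := norm_E_le n (b := Real.pi * (Real.sqrt 3/4)) (by positivity) him
  rw [norm_mul, norm_qθ, omega_im]
  have h1 : ‖Eθ n ((Real.pi:ℂ)*(z+1/2))‖ ≥ 0 := norm_nonneg _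
  calc Real.exp (-(Real.pi * ((n:ℝ)+1/2)^2 * (Real.sqrt 3/2))) * ‖Eθ n ((Real.pi:ℂ)*(z+1/2))‖
      ≤ Real.exp (-(Real.pi * ((n:ℝ)+1/2)^2 * (Real.sqrt 3/2)))
        * ((2*(n:ℝ)+1) * Real.exp (2*n*(Real.pi * (Real.sqrt 3/4)))) := by
        exact mul_le_mul_of_nonneg_left hE (Real.exp_pos _).le
    _ = (2*(n:ℝ)+1) * Real.exp (-(Real.pi * ((n:ℝ)+1/2)^2 * (Real.sqrt 3/2))
          + 2*(n:ℝ)*(Real.pi * (Real.sqrt 3/4))) := by rw [Real.exp_add]; ring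
    _ = (2*(n:ℝ)+1) * (rθ^(n^2) * Kθ) := by
        rw [rθ, Kθ, ← Real.exp_nat_mul, ← Real.exp_add]
        congr 1
        exact congrArg Real.exp (by push_cast; ring)
    _ ≤ 3^n * (rθ^n * Kθ) := by
        have hr0 : (0:ℝ) ≤ rθ := r_pos.le
        have hr1 : rθ ≤ 1 := Real.exp_le_one_iff.2
          (by nlinarith [Real.pi_pos, Real.sqrt_nonneg 3])
        have hpow : rθ^(n^2) ≤ rθ^n := pow_le_pow_of_le_one hr0 hr1 (Nat.le_self_pow two_ne_zero n)
        exact mul_le_mul (two_n_one_le n) (mul_le_mul_of_nonneg_right hpow K_pos.le)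
          (mul_nonneg (pow_nonneg hr0 _) K_pos.le) (by positivity)
    _ = Kθ * (3*rθ)^n := by rw [mul_pow]; ring

lemma theta_factor (z : ℂ) :
    θf z = -(2 * Complex.cos ((Real.pi:ℂ)*(z+1/2)) * Gθ z) := by
  set w := (Real.pi:ℂ)*(z+1/2) with hw
  set f : ℤ → ℂ := fun n => Complex.exp ((Real.pi : ℂ) * Complex.I * ((n : ℂ) + 1/2)^2 * ω
      + 2 * (Real.pi : ℂ) * Complex.I * ((n : ℂ) + 1/2) * (z + 1/2)) with hf
  have hs : Summable f := summable_theta_term z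
  have hpair : ∀ n : ℕ, f (n:ℤ) + f (-((n:ℤ)+1)) = 2 * Complex.cos w * (qθ n * Eθ n w) := by
    intro n
    have c1 : f (n:ℤ) = qθ n * Complex.exp (((2*(n:ℂ)+1)*w)*Complex.I) := by
      simp only [hf]
      rw [qθ, ← Complex.exp_add]
      congr 1
      push_cast
      rw [hw]; ring
    have c2 : f (-((n:ℤ)+1)) = qθ n * Complex.exp (-((2*(n:ℂ)+1)*w)*Complex.I) := by
      simp only [hf]
      rw [qθ, ← Complex.exp_add]
      congr 1
      push_cast
      rw [hw]; ring
    have hcos : Complex.exp (((2*(n:ℂ)+1)*w)*Complex.I) + Complex.exp (-((2*(n:ℂ)+1)*w)*Complex.I)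
        = 2 * Complex.cos ((2*(n:ℂ)+1)*w) := by
      rw [Complex.cos]; ring
    rw [c1, c2, ← mul_add, hcos, ← cos_mul_E]
    ring
  have h1 : ∑' n : ℤ, f n = ∑' n : ℕ, (f (n:ℤ) + f (-((n:ℤ)+1))) :=
    (tsum_nat_add_neg_add_one hs).symm
  have h2 : θf z = -∑' n : ℤ, f n := rfl
  rw [h2, h1, tsum_congr hpair, tsum_mul_left]
  rfl

lemma G_lower {z : ℂ} (hz : |z.im| ≤ Real.sqrt 3/4) : Kθ/4 ≤ ‖Gθ z‖ := by
  set v : ℕ → ℂ := fun n => qθ n * Eθ n ((Real.pi:ℂ)*(z+1/2)) with hv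
  have hb : ∀ n, ‖v n‖ ≤ Kθ*(3*rθ)^n := fun n => term_bound n hz
  have h3r : 3*rθ ≤ 3/7 := by nlinarith [r_le]
  have h3r0 : (0:ℝ) ≤ 3*rθ := by nlinarith [r_pos]
  have hgeo : Summable (fun n : ℕ => Kθ*(3*rθ)^n) :=
    (summable_geometric_of_lt_one h3r0 (by linarith)).mul_left Kθ
  have hsv : Summable v := Summable.of_norm_bounded hgeo hb
  have h0 : v 0 = qθ 0 := by
    simp [hv, Eθ]
  have hK : ‖v 0‖ = Kθ := by
    rw [h0, norm_qθ, omega_im, Kθ]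
    congr 1
    push_cast
    ring
  have htail_sum : Summable (fun n : ℕ => ‖v (n+1)‖) := by
    apply Summable.of_nonneg_of_le (fun n => norm_nonneg _) (fun n => hb (n+1))
    exact (summable_geometric_of_lt_one h3r0 (by linarith)).mul_left Kθ |>.comp_injective
      (add_left_injective 1)
  have htail : ‖∑' n : ℕ, v (n+1)‖ ≤ (3/4) * Kθ := by
    refine le_trans (norm_tsum_le_tsum_norm htail_sum) ?_
    have step1 : ∀ n : ℕ, ‖v (n+1)‖ ≤ Kθ * (3/7:ℝ)^(n+1) := by
      intro n
      refine le_trans (hb (n+1)) ?_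
      exact mul_le_mul_of_nonneg_left (pow_le_pow_left₀ h3r0 h3r (n+1)) K_pos.le
    refine le_trans (Summable.tsum_le_tsum step1 htail_sum ?_) ?_
    · exact ((summable_geometric_of_lt_one (by norm_num) (by norm_num : (3/7:ℝ) < 1)).mul_left
        Kθ).comp_injective (add_left_injective 1)
    · have : ∑' n : ℕ, Kθ * (3/7:ℝ)^(n+1) = Kθ * ((3/7) * (1-3/7)⁻¹) := by
        simp_rw [pow_succ']
        rw [tsum_mul_left, tsum_mul_left, tsum_geometric_of_lt_one (by norm_num) (by norm_num)]
      rw [this]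
      nlinarith [K_pos]
  have hsplit : Gθ z = v 0 + ∑' n : ℕ, v (n+1) := by
    rw [Gθ]
    exact Summable.tsum_eq_zero_add hsv
  have htri : ‖v 0‖ ≤ ‖Gθ z‖ + ‖∑' n : ℕ, v (n+1)‖ := by
    have e : v 0 = Gθ z + (-(∑' n : ℕ, v (n+1))) := by rw [hsplit]; ring
    calc ‖v 0‖ = ‖Gθ z + (-(∑' n : ℕ, v (n+1)))‖ := by rw [← e]
      _ ≤ ‖Gθ z‖ + ‖-(∑' n : ℕ, v (n+1))‖ := norm_add_le _ _
      _ = ‖Gθ z‖ + ‖∑' n : ℕ, v (n+1)‖ := by rw [norm_neg]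
  rw [hK] at htri
  linarith

lemma strip_zero_iff {z : ℂ} (hz : |z.im| ≤ Real.sqrt 3/4) :
    θf z = 0 ↔ ∃ m : ℤ, z = (m:ℂ) := by
  rw [theta_factor]
  have hG : Gθ z ≠ 0 := by
    intro h
    have := G_lower hz
    rw [h, norm_zero] at this
    nlinarith [K_pos]
  constructor
  · intro h
    have h' := neg_eq_zero.1 h
    have hcos : Complex.cos ((Real.pi:ℂ)*(z+1/2)) = 0 := by
      rcases mul_eq_zero.1 h' with h''|h''
      · rcases mul_eq_zero.1 h'' with h3|h3
        · norm_num at h3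
        · exact h3
      · exact absurd h'' hG
    rcases Complex.cos_eq_zero_iff.1 hcos with ⟨k, hk⟩
    refine ⟨k, ?_⟩
    have hπ : (Real.pi:ℂ) ≠ 0 := Complex.ofReal_ne_zero.2 Real.pi_ne_zero
    have h2 : (Real.pi:ℂ)*(z+1/2) = (Real.pi:ℂ)*((k:ℂ)+1/2) := by rw [hk]; ring
    have h3 := mul_left_cancel₀ hπ h2
    have := add_right_cancel h3
    exact this
  · rintro ⟨m, rfl⟩
    have hcos : Complex.cos ((Real.pi:ℂ)*((m:ℂ)+1/2)) = 0 :=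
      Complex.cos_eq_zero_iff.2 ⟨m, by push_cast; ring⟩
    rw [hcos]
    ring

lemma zero_shiftw (z : ℂ) : θf (z + ω) = 0 ↔ θf z = 0 := by
  rw [shiftw, mul_eq_zero]
  simp [νθ_ne z]

lemma zero_shiftw_int : ∀ (n : ℤ) (z : ℂ), θf (z + (n:ℂ)*ω) = 0 ↔ θf z = 0 := by
  intro n
  induction n using Int.induction_on with
  | zero => intro z; simp
  | succ k ih =>
      intro z
      rw [show ((((k:ℤ)+1):ℤ):ℂ) = ((k:ℤ):ℂ) + 1 by push_cast; ring]
      rw [show z + (((k:ℤ):ℂ)+1)*ω = (z + ((k:ℤ):ℂ)*ω) + ω by ring, zero_shiftw]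
      exact ih z
  | pred k ih =>
      intro z
      rw [show (((-(k:ℤ)-1):ℤ):ℂ) = -((k:ℤ):ℂ) - 1 by push_cast; ring]
      have h2 := zero_shiftw (z + (-((k:ℤ):ℂ)-1)*ω)
      rw [show (z + (-((k:ℤ):ℂ)-1)*ω) + ω = z + (-((k:ℤ):ℂ))*ω by ring] at h2
      rw [← h2]
      have h3 := ih z
      rw [show (((-(k:ℤ)):ℤ):ℂ) = -((k:ℤ):ℂ) by push_cast; ring] at h3
      exact h3

lemma im_sub_int_omega (z : ℂ) (n : ℤ) : (z - (n:ℂ)*ω).im = z.im - (n:ℝ)*(Real.sqrt 3/2) := by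
  simp [Complex.sub_im, Complex.mul_im, omega_im]

lemma main_zero_iff (z : ℂ) : θf z = 0 ↔ z ∈ Lam := by
  have hc : (0:ℝ) < Real.sqrt 3/2 := by
    have := sqrt3_ge; linarith
  constructor
  · intro h
    set n : ℤ := round (z.im / (Real.sqrt 3/2)) with hn
    have him : |(z - (n:ℂ)*ω).im| ≤ Real.sqrt 3/4 := by
      rw [im_sub_int_omega]
      have h1 := abs_sub_round (z.im / (Real.sqrt 3/2))
      have h2 : |z.im - (n:ℝ)*(Real.sqrt 3/2)|
          = (Real.sqrt 3/2) * |z.im/(Real.sqrt 3/2) - (n:ℝ)| := by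
        rw [show z.im - (n:ℝ)*(Real.sqrt 3/2)
            = (Real.sqrt 3/2) * (z.im/(Real.sqrt 3/2) - (n:ℝ)) by field_simp,
          abs_mul, abs_of_pos hc]
      rw [h2]
      calc (Real.sqrt 3/2) * |z.im/(Real.sqrt 3/2) - (n:ℝ)| ≤ (Real.sqrt 3/2) * (1/2) :=
            mul_le_mul_of_nonneg_left h1 hc.le
        _ = Real.sqrt 3/4 := by ring
    have key := zero_shiftw_int n (z - (n:ℂ)*ω)
    rw [show (z - (n:ℂ)*ω) + (n:ℂ)*ω = z by ring] at key
    rcases (strip_zero_iff him).1 (key.1 h) with ⟨m, hm⟩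
    exact ⟨m, n, by rw [← hm]; ring⟩
  · rintro ⟨m, n, rfl⟩
    have key := zero_shiftw_int n (m:ℂ)
    rw [key]
    refine (strip_zero_iff ?_).2 ⟨m, rfl⟩
    rw [show ((m:ℂ)).im = 0 by simp, abs_zero]
    positivity


lemma theta_zero : θf 0 = 0 := (main_zero_iff 0).2 ⟨0, 0, by simp⟩

open Filter Topology

lemma deriv_zero_ne : deriv θf 0 ≠ 0 := by
  have hder : HasDerivAt θf (deriv θf 0) 0 := (diff_θf 0).hasDerivAt
  have hslope : Tendsto (slope θf 0) (𝓝[≠] (0:ℂ)) (𝓝 (deriv θf 0)) :=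
    hasDerivAt_iff_tendsto_slope.1 hder
  have hι : Tendsto (fun t : ℝ => (t:ℂ)) (𝓝[≠] (0:ℝ)) (𝓝[≠] (0:ℂ)) := by
    rw [tendsto_nhdsWithin_iff]
    constructor
    · exact (Complex.continuous_ofReal.tendsto' 0 0 rfl).mono_left nhdsWithin_le_nhds
    · filter_upwards [self_mem_nhdsWithin] with t ht
      exact Complex.ofReal_ne_zero.2 ht
  have hnorm : Tendsto (fun t : ℝ => ‖slope θf 0 (t:ℂ)‖) (𝓝[≠] (0:ℝ)) (𝓝 ‖deriv θf 0‖) :=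
    ((hslope.comp hι).norm)
  -- the sin(π t)/t limit
  have hsin : Tendsto (fun t : ℝ => Real.sin (Real.pi * t) / t) (𝓝[≠] (0:ℝ)) (𝓝 Real.pi) := by
    have hd : HasDerivAt (fun t : ℝ => Real.sin (Real.pi * t)) Real.pi 0 := by
      have h1 : HasDerivAt (fun t : ℝ => Real.pi * t) Real.pi 0 := by
        simpa using (hasDerivAt_id (0:ℝ)).const_mul Real.pi
      simpa [Function.comp_def] using (Real.hasDerivAt_sin (Real.pi * 0)).comp 0 h1
    have := hasDerivAt_iff_tendsto_slope.1 hd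
    apply this.congr'
    filter_upwards [self_mem_nhdsWithin] with t _
    rw [slope_def_field]
    norm_num
  have habs : Tendsto (fun t : ℝ => Kθ/2 * |Real.sin (Real.pi * t) / t|) (𝓝[≠] (0:ℝ))
      (𝓝 (Kθ/2 * Real.pi)) := by
    have := (hsin.abs).const_mul (Kθ/2)
    rwa [abs_of_pos Real.pi_pos] at this
  have hev : ∀ᶠ t in (𝓝[≠] (0:ℝ)),
      Kθ/2 * |Real.sin (Real.pi * t) / t| ≤ ‖slope θf 0 (t:ℂ)‖ := by
    filter_upwards [self_mem_nhdsWithin] with t ht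
    have htne : t ≠ 0 := ht
    have ht' : (t:ℂ) ≠ 0 := Complex.ofReal_ne_zero.2 htne
    rw [slope_def_field, theta_zero, sub_zero, sub_zero, norm_div]
    have hcos : Complex.cos ((Real.pi:ℂ)*((t:ℂ)+1/2)) = -Complex.sin ((Real.pi:ℂ)*(t:ℂ)) := by
      rw [show (Real.pi:ℂ)*((t:ℂ)+1/2) = (Real.pi:ℂ)*(t:ℂ) + (Real.pi:ℂ)/2 by ring]
      exact Complex.cos_add_pi_div_two _
    have hnum : ‖θf (t:ℂ)‖ = 2 * |Real.sin (Real.pi * t)| * ‖Gθ (t:ℂ)‖ := by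
      rw [theta_factor, norm_neg, norm_mul, norm_mul, hcos, norm_neg]
      have : (Real.pi:ℂ)*(t:ℂ) = ((Real.pi * t : ℝ):ℂ) := by push_cast; ring
      rw [this, ← Complex.ofReal_sin, Complex.norm_real, Real.norm_eq_abs]
      norm_num
    have hG : Kθ/4 ≤ ‖Gθ (t:ℂ)‖ := G_lower (by simp; positivity)
    rw [hnum, Complex.norm_real, Real.norm_eq_abs, abs_div]
    have h1 : 0 ≤ |Real.sin (Real.pi*t)| := abs_nonneg _
    have h2 : 0 < |t| := abs_pos.2 htne
    rw [show Kθ/2 * (|Real.sin (Real.pi*t)|/|t|) = (Kθ/2 * |Real.sin (Real.pi*t)|)/|t| by ring]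
    rw [div_le_div_iff_of_pos_right h2]
    nlinarith [K_pos, mul_le_mul_of_nonneg_left hG (mul_nonneg (by norm_num : (0:ℝ) ≤ 2) h1)]
  have hle := le_of_tendsto_of_tendsto habs hnorm hev
  intro h0
  rw [h0, norm_zero] at hle
  nlinarith [K_pos, Real.pi_pos]

lemma derivnz_int : ∀ m : ℤ, deriv θf ((m:ℂ)) ≠ 0 := by
  intro m
  induction m using Int.induction_on with
  | zero => simpa using deriv_zero_ne
  | succ k ih =>
      rw [show (((k:ℤ)+1:ℤ):ℂ) = ((k:ℤ):ℂ) + 1 by push_cast; ring, deriv_shift1]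
      exact neg_ne_zero.2 ih
  | pred k ih =>
      have h := deriv_shift1 (((-(k:ℤ)-1:ℤ)):ℂ)
      rw [show (((-(k:ℤ)-1:ℤ)):ℂ) + 1 = (((-(k:ℤ):ℤ)):ℂ) by push_cast; ring] at h
      intro h0
      rw [h0, neg_zero] at h
      exact ih h

lemma derivnz (m n : ℤ) : deriv θf ((m:ℂ) + (n:ℂ)*ω) ≠ 0 := by
  induction n using Int.induction_on with
  | zero => simpa using derivnz_int m
  | succ k ih =>
      have hz : θf ((m:ℂ) + ((k:ℤ):ℂ)*ω) = 0 := (main_zero_iff _).2 ⟨m, k, rfl⟩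
      rw [show ((m:ℂ) + (((k:ℤ)+1:ℤ):ℂ)*ω) = ((m:ℂ) + ((k:ℤ):ℂ)*ω) + ω by push_cast; ring,
        deriv_shiftw _ hz]
      exact mul_ne_zero (νθ_ne _) ih
  | pred k ih =>
      have hz : θf ((m:ℂ) + ((-(k:ℤ)-1:ℤ):ℂ)*ω) = 0 := (main_zero_iff _).2 ⟨m, -k-1, rfl⟩
      have h := deriv_shiftw _ hz
      rw [show ((m:ℂ) + ((-(k:ℤ)-1:ℤ):ℂ)*ω) + ω = (m:ℂ) + ((-(k:ℤ):ℤ):ℂ)*ω by push_cast; ring] at h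
      intro h0
      rw [h0, mul_zero] at h
      exact ih h


/-- the zero set of θ is exactly the lattice Λ, and all zeros are simple. -/
theorem stmt9 :
    (∀ z : ℂ, θf z = 0 ↔ z ∈ Lam) ∧ (∀ z ∈ Lam, deriv θf z ≠ 0) := by
  refine ⟨main_zero_iff, ?_⟩
  rintro z ⟨m, n, rfl⟩
  exact derivnz m n
end
end

section
/- Let θ be as in the context, let k ∈ ℂ, set z(k) := √3·k/(4πi), and define F_k(z) := exp((i/2)(z − conj z)·k)·θ(z − z(k))/θ(z) for z ∉ Λ. Then for every γ ∈ Λ and every z ∉ Λ one has F_k(z + γ) = F_k(z). -/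
noncomputable section

open Complex ComplexConjugate

/-- z(k) = √3 k / (4πi). -/
def zpt (k : ℂ) : ℂ := (Real.sqrt 3 : ℂ) * k / (4 * (Real.pi : ℂ) * Complex.I)

/-- F_k(z) = e^{(i/2)(z − z̄)k} θ(z − z(k)) / θ(z). -/
def Fk (k z : ℂ) : ℂ :=
  Complex.exp (Complex.I / 2 * (z - conj z) * k) * θf (z - zpt k) / θf z


/-! ### Auxiliary lemmas for stmt11 -/

/-- The exponent of the `n`-th term of the theta series. -/
def Eterm (n : ℤ) (z : ℂ) : ℂ :=
  (Real.pi : ℂ) * Complex.I * ((n : ℂ) + 1/2)^2 * ω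
      + 2 * (Real.pi : ℂ) * Complex.I * ((n : ℂ) + 1/2) * (z + 1/2)

lemma θf_eq_s11 (z : ℂ) : θf z = -∑' n : ℤ, Complex.exp (Eterm n z) := rfl

lemma term_add_one (n : ℤ) (z : ℂ) :
    Complex.exp (Eterm n (z + 1)) = - Complex.exp (Eterm n z) := by
  have h : Eterm n (z + 1)
      = Eterm n z + ((n:ℂ) * (2 * (Real.pi:ℂ) * Complex.I) + (Real.pi:ℂ) * Complex.I) := by
    unfold Eterm; ring
  rw [h, Complex.exp_add, Complex.exp_add, Complex.exp_int_mul_two_pi_mul_I,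
    Complex.exp_pi_mul_I]
  ring

lemma theta_add_one (z : ℂ) : θf (z + 1) = - θf z := by
  rw [θf_eq_s11, θf_eq_s11, neg_neg, tsum_congr (fun n => term_add_one n z), tsum_neg, neg_neg]

lemma term_add_omega (n : ℤ) (z : ℂ) :
    Complex.exp (Eterm n (z + ω))
      = Complex.exp (-((Real.pi:ℂ) * Complex.I * ω) - 2 * (Real.pi:ℂ) * Complex.I * (z + 1/2))
        * Complex.exp (Eterm (n + 1) z) := by
  rw [← Complex.exp_add]
  congr 1
  unfold Eterm
  push_cast
  ring

lemma theta_add_omega (z : ℂ) :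
    θf (z + ω) = -Complex.exp (-((Real.pi:ℂ) * Complex.I * ω) - 2 * (Real.pi:ℂ) * Complex.I * z)
      * θf z := by
  rw [θf_eq_s11, θf_eq_s11, tsum_congr (fun n => term_add_omega n z), tsum_mul_left,
    show (∑' n : ℤ, Complex.exp (Eterm (n + 1) z)) = ∑' n : ℤ, Complex.exp (Eterm n z) from
      (Equiv.addRight (1:ℤ)).tsum_eq fun n => Complex.exp (Eterm n z)]
  have h : Complex.exp (-((Real.pi:ℂ) * Complex.I * ω) - 2 * (Real.pi:ℂ) * Complex.I * (z + 1/2))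
      = Complex.exp (-((Real.pi:ℂ) * Complex.I * ω) - 2 * (Real.pi:ℂ) * Complex.I * z)
        * Complex.exp (-((Real.pi:ℂ) * Complex.I)) := by
    rw [← Complex.exp_add]; congr 1; ring
  rw [h, Complex.exp_neg, Complex.exp_pi_mul_I]
  ring

lemma expI_add_one (a : ℂ) :
    Complex.exp ((Real.pi:ℂ) * Complex.I * (a + 1)) = -Complex.exp ((Real.pi:ℂ) * Complex.I * a) := by
  rw [show (Real.pi:ℂ) * Complex.I * (a + 1) = (Real.pi:ℂ) * Complex.I * a + Real.pi * Complex.I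
    by ring, Complex.exp_add, Complex.exp_pi_mul_I]; ring

lemma expI_sub_one (a : ℂ) :
    Complex.exp ((Real.pi:ℂ) * Complex.I * (a - 1)) = -Complex.exp ((Real.pi:ℂ) * Complex.I * a) := by
  have := expI_add_one (a - 1)
  rw [sub_add_cancel] at this
  linear_combination this

lemma theta_int_add (m : ℤ) (z : ℂ) :
    θf (z + (m : ℂ)) = Complex.exp ((Real.pi:ℂ) * Complex.I * (m:ℂ)) * θf z := by
  induction m using Int.induction_on with
  | zero => simp
  | succ k ih =>
      have h : z + ((k : ℤ) + 1 : ℤ) = (z + (k : ℤ)) + 1 := by push_cast; ring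
      rw [h, theta_add_one, ih]
      push_cast
      rw [expI_add_one]
      ring
  | pred k ih =>
      have h1 : (z + ((-(k:ℤ) - 1 : ℤ) : ℂ)) + 1 = z + ((-(k:ℤ) : ℤ) : ℂ) := by push_cast; ring
      have h2 := theta_add_one (z + ((-(k:ℤ) - 1 : ℤ) : ℂ))
      rw [h1, ih] at h2
      push_cast at h2 ⊢
      rw [expI_sub_one]
      linear_combination h2

lemma theta_int_omega (n : ℤ) (z : ℂ) :
    θf (z + (n : ℂ) * ω) = Complex.exp ((Real.pi:ℂ) * Complex.I * (n:ℂ)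
      - (Real.pi:ℂ) * Complex.I * ((n:ℂ))^2 * ω
      - 2 * (Real.pi:ℂ) * Complex.I * (n:ℂ) * z) * θf z := by
  induction n using Int.induction_on with
  | zero => simp
  | succ k ih =>
      have h : z + (((k : ℤ) + 1 : ℤ) : ℂ) * ω = (z + (k : ℤ) * ω) + ω := by push_cast; ring
      rw [h, theta_add_omega, ih]
      push_cast
      have hexp : Complex.exp (-((Real.pi:ℂ) * Complex.I * ω)
            - 2 * (Real.pi:ℂ) * Complex.I * (z + (k:ℕ) * ω))
          * Complex.exp ((Real.pi:ℂ) * Complex.I * (k:ℕ)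
            - (Real.pi:ℂ) * Complex.I * ((k:ℕ):ℂ)^2 * ω
            - 2 * (Real.pi:ℂ) * Complex.I * (k:ℕ) * z)
          = Complex.exp (-((Real.pi:ℂ) * Complex.I)
            + ((Real.pi:ℂ) * Complex.I * ((k:ℕ)+1)
            - (Real.pi:ℂ) * Complex.I * ((k:ℕ)+1:ℂ)^2 * ω
            - 2 * (Real.pi:ℂ) * Complex.I * ((k:ℕ)+1) * z)) := by
        rw [← Complex.exp_add]; congr 1; ring
      rw [Complex.exp_add, Complex.exp_neg, Complex.exp_pi_mul_I] at hexp
      linear_combination (-(θf z)) * hexp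
  | pred k ih =>
      have h1 : (z + ((-(k:ℤ) - 1 : ℤ) : ℂ) * ω) + ω = z + ((-(k:ℤ) : ℤ) : ℂ) * ω := by
        push_cast; ring
      have h2 := theta_add_omega (z + ((-(k:ℤ) - 1 : ℤ) : ℂ) * ω)
      rw [h1, ih] at h2
      push_cast at h2 ⊢
      apply mul_left_cancel₀ (Complex.exp_ne_zero
        (-((Real.pi:ℂ) * Complex.I * ω) - 2 * (Real.pi:ℂ) * Complex.I * (z + (-(k:ℂ) - 1) * ω)))
      have key : Complex.exp (-((Real.pi:ℂ) * Complex.I * ω)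
            - 2 * (Real.pi:ℂ) * Complex.I * (z + (-(k:ℂ) - 1) * ω))
          * Complex.exp ((Real.pi:ℂ) * Complex.I * (-(k:ℂ) - 1)
            - (Real.pi:ℂ) * Complex.I * (-(k:ℂ) - 1)^2 * ω
            - 2 * (Real.pi:ℂ) * Complex.I * (-(k:ℂ) - 1) * z)
          = Complex.exp (-((Real.pi:ℂ) * Complex.I)
            + ((Real.pi:ℂ) * Complex.I * -(k:ℂ)
            - (Real.pi:ℂ) * Complex.I * (-(k:ℂ))^2 * ω
            - 2 * (Real.pi:ℂ) * Complex.I * -(k:ℂ) * z)) := by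
        rw [← Complex.exp_add]; congr 1; ring
      rw [Complex.exp_add, Complex.exp_neg, Complex.exp_pi_mul_I] at key
      linear_combination h2 - θf z * key

lemma theta_lattice (m n : ℤ) (w : ℂ) :
    θf (w + ((m : ℂ) + (n : ℂ) * ω))
      = Complex.exp ((Real.pi:ℂ) * Complex.I * (m:ℂ) + (Real.pi:ℂ) * Complex.I * (n:ℂ)
          - (Real.pi:ℂ) * Complex.I * ((n:ℂ))^2 * ω
          - 2 * (Real.pi:ℂ) * Complex.I * (n:ℂ) * w) * θf w := by
  rw [show w + ((m : ℂ) + (n : ℂ) * ω) = (w + (n:ℂ) * ω) + (m:ℂ) by ring,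
    theta_int_add, theta_int_omega, ← mul_assoc, ← Complex.exp_add]
  congr 2
  ring

lemma omega_val : ω = ((-1/2 : ℝ) : ℂ) + ((Real.sqrt 3 / 2 : ℝ) : ℂ) * Complex.I := by
  have h1 : (2 * (Real.pi:ℂ) * Complex.I / 3) = ((2 * Real.pi / 3 : ℝ) : ℂ) * Complex.I := by
    push_cast; ring
  rw [ω, h1, Complex.exp_mul_I, ← Complex.ofReal_cos, ← Complex.ofReal_sin]
  have hc : Real.cos (2 * Real.pi / 3) = -1/2 := by
    rw [show 2 * Real.pi / 3 = Real.pi - Real.pi / 3 by ring, Real.cos_pi_sub,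
      Real.cos_pi_div_three]
    norm_num
  have hs : Real.sin (2 * Real.pi / 3) = Real.sqrt 3 / 2 := by
    rw [show 2 * Real.pi / 3 = Real.pi - Real.pi / 3 by ring, Real.sin_pi_sub,
      Real.sin_pi_div_three]
  rw [hc, hs]

lemma conj_omega : conj ω = ω - (Real.sqrt 3 : ℂ) * Complex.I := by
  rw [omega_val]
  simp only [map_add, map_mul, Complex.conj_ofReal, Complex.conj_I]
  push_cast
  ring

/-- F_k is Λ-periodic on ℂ ∖ Λ. -/
theorem stmt11 (k : ℂ) :
    ∀ γ ∈ Lam, ∀ z : ℂ, z ∉ Lam → Fk k (z + γ) = Fk k z := by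
  rintro γ ⟨m, n, rfl⟩ z _
  unfold Fk
  rw [show z + ((m:ℂ) + (n:ℂ) * ω) - zpt k = (z - zpt k) + ((m:ℂ) + (n:ℂ) * ω) by ring,
    theta_lattice m n (z - zpt k), theta_lattice m n z]
  have hconj : conj (z + ((m:ℂ) + (n:ℂ) * ω))
      = conj z + ((m:ℂ) + (n:ℂ) * (ω - (Real.sqrt 3 : ℂ) * Complex.I)) := by
    simp only [map_add, map_mul, conj_omega, map_intCast]
  rw [hconj]
  by_cases hθ : θf z = 0
  · simp [hθ]
  · have hzpt : 2 * (Real.pi:ℂ) * Complex.I * zpt k = (Real.sqrt 3 : ℂ) * k / 2 := by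
      rw [zpt]
      have hπ : (Real.pi:ℂ) ≠ 0 := Complex.ofReal_ne_zero.mpr Real.pi_ne_zero
      field_simp
      ring
    rw [div_eq_div_iff (mul_ne_zero (Complex.exp_ne_zero _) hθ) hθ]
    have key : Complex.exp (Complex.I / 2
          * (z + ((m:ℂ) + (n:ℂ) * ω)
            - (conj z + ((m:ℂ) + (n:ℂ) * (ω - (Real.sqrt 3 : ℂ) * Complex.I)))) * k)
        * Complex.exp ((Real.pi:ℂ) * Complex.I * (m:ℂ) + (Real.pi:ℂ) * Complex.I * (n:ℂ)
          - (Real.pi:ℂ) * Complex.I * ((n:ℂ))^2 * ω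
          - 2 * (Real.pi:ℂ) * Complex.I * (n:ℂ) * (z - zpt k))
        = Complex.exp (Complex.I / 2 * (z - conj z) * k)
        * Complex.exp ((Real.pi:ℂ) * Complex.I * (m:ℂ) + (Real.pi:ℂ) * Complex.I * (n:ℂ)
          - (Real.pi:ℂ) * Complex.I * ((n:ℂ))^2 * ω
          - 2 * (Real.pi:ℂ) * Complex.I * (n:ℂ) * z) := by
      rw [← Complex.exp_add, ← Complex.exp_add]
      congr 1
      linear_combination (n:ℂ) * hzpt + ((Real.sqrt 3 : ℂ) * (n:ℂ) * k / 2) * Complex.I_sq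
    linear_combination θf (z - zpt k) * θf z * key
end
end
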